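/- Fix a vector space V over a field K with basis v_1,…,v_m, an associative unital product μ on V with identity v_1 and structure constants γ_{hl}^k, and a function φ : {1,…,m} → ℕ with φ(1) = 0 and φ(k) − φ(h) − φ(l) ≥ 0 whenever γ_{hl}^k ≠ 0. Define μ_0(v_h ⊗ v_l) = Σ_{k : φ(k) = φ(h)+φ(l)} γ_{hl}^k v_k. Then μ_0 is an associative product on V with identity element v_1. -/

import Mathlib

/-- Degeneration of an associative product.  `V` is a vector space with basis
`v_1, …, v_m` (indexed by `Fin (m+1)`, with `v_1 = b 0`), `μ` an associative
bilinear product with identity `b 0` and structure constants `γ`, and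
`φ` a weight function with `φ 0 = 0` and `φ k ≥ φ h + φ l` whenever `γ h l k ≠ 0`.
Then the degenerate product `μ₀ (v_h, v_l) = ∑_{k : φ k = φ h + φ l} γ h l k • v_k`
is associative with identity element `b 0`. -/
theorem stmt11 (K V : Type*) [Field K] [AddCommGroup V] [Module K V] (m : ℕ)
    (b : Module.Basis (Fin (m + 1)) K V)
    (μ : V →ₗ[K] V →ₗ[K] V)
    (hassoc : ∀ x y z, μ (μ x y) z = μ x (μ y z))
    (hone : ∀ x, μ (b 0) x = x ∧ μ x (b 0) = x)
    (γ : Fin (m + 1) → Fin (m + 1) → Fin (m + 1) → K)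
    (hγ : ∀ h l k, γ h l k = b.repr (μ (b h) (b l)) k)
    (φ : Fin (m + 1) → ℕ) (hφ0 : φ 0 = 0)
    (hφ : ∀ h l k, γ h l k ≠ 0 → φ h + φ l ≤ φ k)
    (μ₀ : V →ₗ[K] V →ₗ[K] V)
    (hμ₀ : ∀ h l, μ₀ (b h) (b l) =
      ∑ k ∈ Finset.univ.filter (fun k => φ k = φ h + φ l), γ h l k • b k) :
    (∀ x y z, μ₀ (μ₀ x y) z = μ₀ x (μ₀ y z)) ∧ (∀ x, μ₀ (b 0) x = x ∧ μ₀ x (b 0) = x) := by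
  classical
  -- expansion of μ on basis elements
  have hexp : ∀ a c : Fin (m + 1), μ (b a) (b c) = ∑ k, γ a c k • b k := by
    intro a c
    conv_lhs => rw [← b.sum_repr (μ (b a) (b c))]
    exact Finset.sum_congr rfl fun k _ => by rw [hγ]
  -- structure-constant form of associativity of μ
  have assoc_coeff : ∀ h l j n, (∑ k, γ h l k * γ k j n) = ∑ k, γ l j k * γ h k n := by
    intro h l j n
    have h1 : b.repr (μ (μ (b h) (b l)) (b j)) n = ∑ k, γ h l k * γ k j n := by
      rw [hexp h l, map_sum]
      simp only [LinearMap.coe_sum, Finset.sum_apply, map_smul, LinearMap.smul_apply,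
        map_sum, Finsupp.coe_finset_sum, Finset.sum_apply, Finsupp.coe_smul, Pi.smul_apply,
        smul_eq_mul]
      exact Finset.sum_congr rfl fun k _ => by rw [← hγ]
    have h2 : b.repr (μ (b h) (μ (b l) (b j))) n = ∑ k, γ l j k * γ h k n := by
      rw [hexp l j, map_sum, map_sum]
      simp only [map_smul, Finsupp.coe_finset_sum, Finset.sum_apply, Finsupp.coe_smul,
        Pi.smul_apply, smul_eq_mul]
      exact Finset.sum_congr rfl fun k _ => by rw [← hγ]
    rw [← h1, ← h2, hassoc]
  -- left-hand side of degenerate associativity on basis elements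
  have main : ∀ h l j, μ₀ (μ₀ (b h) (b l)) (b j) =
      ∑ n ∈ Finset.univ.filter (fun n => φ n = φ h + φ l + φ j),
        (∑ k ∈ Finset.univ.filter (fun k => φ k = φ h + φ l), γ h l k * γ k j n) • b n := by
    intro h l j
    rw [hμ₀, map_sum]
    simp only [LinearMap.sum_apply, map_smul, LinearMap.smul_apply]
    have step : ∀ k ∈ Finset.univ.filter (fun k => φ k = φ h + φ l),
        γ h l k • μ₀ (b k) (b j) =
        ∑ n ∈ Finset.univ.filter (fun n => φ n = φ h + φ l + φ j),
          (γ h l k * γ k j n) • b n := by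
      intro k hk
      rw [Finset.mem_filter] at hk
      rw [hμ₀, hk.2, Finset.smul_sum]
      exact Finset.sum_congr rfl fun n _ => by rw [smul_smul]
    rw [Finset.sum_congr rfl step, Finset.sum_comm]
    exact Finset.sum_congr rfl fun n _ => by rw [Finset.sum_smul]
  -- right-hand side on basis elements
  have main' : ∀ h l j, μ₀ (b h) (μ₀ (b l) (b j)) =
      ∑ n ∈ Finset.univ.filter (fun n => φ n = φ h + (φ l + φ j)),
        (∑ k ∈ Finset.univ.filter (fun k => φ k = φ l + φ j), γ l j k * γ h k n) • b n := by
    intro h l j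
    rw [hμ₀, map_sum]
    have step : ∀ k ∈ Finset.univ.filter (fun k => φ k = φ l + φ j),
        μ₀ (b h) (γ l j k • b k) =
        ∑ n ∈ Finset.univ.filter (fun n => φ n = φ h + (φ l + φ j)),
          (γ l j k * γ h k n) • b n := by
      intro k hk
      rw [Finset.mem_filter] at hk
      rw [map_smul, hμ₀, hk.2, Finset.smul_sum]
      exact Finset.sum_congr rfl fun n _ => by rw [smul_smul]
    rw [Finset.sum_congr rfl step, Finset.sum_comm]
    exact Finset.sum_congr rfl fun n _ => by rw [Finset.sum_smul]
  -- filtered sums of products can be extended to full sums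
  have full1 : ∀ h l j n, φ n = φ h + φ l + φ j →
      (∑ k ∈ Finset.univ.filter (fun k => φ k = φ h + φ l), γ h l k * γ k j n) =
      ∑ k, γ h l k * γ k j n := by
    intro h l j n hn
    refine Finset.sum_subset (Finset.filter_subset _ _) ?_
    intro k _ hk
    rw [Finset.mem_filter] at hk
    push_neg at hk
    have hk' := hk (Finset.mem_univ k)
    by_contra habs
    have h1 : γ h l k ≠ 0 := fun e => habs (by rw [e, zero_mul])
    have h2 : γ k j n ≠ 0 := fun e => habs (by rw [e, mul_zero])
    have b1 := hφ h l k h1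
    have b2 := hφ k j n h2
    omega
  have full2 : ∀ h l j n, φ n = φ h + (φ l + φ j) →
      (∑ k ∈ Finset.univ.filter (fun k => φ k = φ l + φ j), γ l j k * γ h k n) =
      ∑ k, γ l j k * γ h k n := by
    intro h l j n hn
    refine Finset.sum_subset (Finset.filter_subset _ _) ?_
    intro k _ hk
    rw [Finset.mem_filter] at hk
    push_neg at hk
    have hk' := hk (Finset.mem_univ k)
    by_contra habs
    have h1 : γ l j k ≠ 0 := fun e => habs (by rw [e, zero_mul])
    have h2 : γ h k n ≠ 0 := fun e => habs (by rw [e, mul_zero])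
    have b1 := hφ l j k h1
    have b2 := hφ h k n h2
    omega
  -- associativity on basis elements
  have key : ∀ h l j, μ₀ (μ₀ (b h) (b l)) (b j) = μ₀ (b h) (μ₀ (b l) (b j)) := by
    intro h l j
    rw [main, main']
    have hfil : (Finset.univ.filter (fun n => φ n = φ h + φ l + φ j)) =
        (Finset.univ.filter (fun n => φ n = φ h + (φ l + φ j))) := by
      simp [add_assoc]
    rw [hfil]
    refine Finset.sum_congr rfl fun n hn => ?_
    rw [Finset.mem_filter] at hn
    rw [full1 h l j n (by omega), full2 h l j n hn.2, assoc_coeff]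
  -- identity on basis elements
  have hid : ∀ l, μ₀ (b 0) (b l) = b l ∧ μ₀ (b l) (b 0) = b l := by
    intro l
    have g1 : ∀ k, γ 0 l k = if l = k then 1 else 0 := by
      intro k
      rw [hγ, (hone (b l)).1, b.repr_self, Finsupp.single_apply]
    have g2 : ∀ k, γ l 0 k = if l = k then 1 else 0 := by
      intro k
      rw [hγ, (hone (b l)).2, b.repr_self, Finsupp.single_apply]
    constructor
    · rw [hμ₀]
      rw [show (Finset.univ.filter (fun k => φ k = φ 0 + φ l)) =
          (Finset.univ.filter (fun k => φ k = φ l)) by simp [hφ0]]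
      rw [Finset.sum_congr rfl (fun k _ => by rw [g1 k])]
      simp [ite_smul]
    · rw [hμ₀]
      rw [show (Finset.univ.filter (fun k => φ k = φ l + φ 0)) =
          (Finset.univ.filter (fun k => φ k = φ l)) by simp [hφ0]]
      rw [Finset.sum_congr rfl (fun k _ => by rw [g2 k])]
      simp [ite_smul]
  constructor
  · intro x y z
    rw [← b.sum_repr x, ← b.sum_repr y, ← b.sum_repr z]
    simp only [map_sum, map_smul, LinearMap.sum_apply, LinearMap.smul_apply, Finset.smul_sum]
    refine Finset.sum_congr rfl fun i _ => Finset.sum_congr rfl fun j _ =>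
      Finset.sum_congr rfl fun k _ => ?_
    rw [key]
  · intro x
    have hL : (μ₀ (b 0) : V →ₗ[K] V) = LinearMap.id := b.ext fun l => (hid l).1
    have hR : (μ₀.flip (b 0) : V →ₗ[K] V) = LinearMap.id := b.ext fun l => (hid l).2
    constructor
    · rw [hL]; rfl
    · have := LinearMap.congr_fun hR x
      simpa [LinearMap.flip_apply] using this
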